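/- Let δ, δ̃ ≥ 0, L > 0, N ≥ 1, let Q be a convex compact set, and let ψ, ψ_δ : Q × Q → ℝ satisfy: (i) ψ(x, y) ≤ ψ_δ(x, y) + δ for all x, y ∈ Q; (ii) ψ_δ(·, y) is convex for every y ∈ Q; (iii) ψ_δ(x, x) = 0 for all x ∈ Q; (iv) ψ_δ(x, y) + ψ_δ(y, x) ≤ δ for all x, y ∈ Q; and ψ(·, y) is upper semicontinuous so that the maxima below exist. Let iterates z_k, w_k ∈ Q and 0 < L_{k+1} ≤ 2·L (k = 0, …, N−1) satisfy: w_k is a δ̃-approximate minimizer on Q of x ↦ ψ_δ(x, z_k) + L_{k+1}·V[z_k](x); z_{k+1} is a δ̃-approximate minimizer on Q of x ↦ ψ_δ(x, w_k) + L_{k+1}·V[z_k](x); and ψ_δ(z_{k+1}, z_k) ≤ ψ_δ(z_{k+1}, w_k) + ψ_δ(w_k, z_k) + L_{k+1}·(V[z_k](w_k) + V[w_k](z_{k+1})) + δ. Then the weighted average ŵ_N := (1/S_N)·∑_{k=0}^{N−1} w_k/L_{k+1}, where S_N := ∑_{k=0}^{N−1} 1/L_{k+1}, satisfies max_{u ∈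 Q} ψ(ŵ_N, u) ≤ (2·L·max_{u ∈ Q} V[z₀](u))/N + 3·δ + 2·δ̃. -/

import Mathlib

open RealInnerProductSpace Finset

/-- The Bregman divergence `V[y](x) = d(x) - d(y) - ⟪∇d(y), x - y⟫` generated by `d`
with gradient map `Dd`. -/
noncomputable def breg {E : Type*} [NormedAddCommGroup E] [InnerProductSpace ℝ E]
    (d : E → ℝ) (Dd : E → E) (y x : E) : ℝ :=
  d x - d y - ⟪Dd y, x - y⟫

/-- `g` is a subgradient of `ψ` at `z` (relative to the set `Q`). -/
def IsSubgradOn {E : Type*} [NormedAddCommGroup E] [InnerProductSpace ℝ E]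
    (Q : Set E) (ψ : E → ℝ) (z g : E) : Prop :=
  ∀ x ∈ Q, ψ z + ⟪g, x - z⟫ ≤ ψ x

/-- `ψ` is `m`-strongly convex relative to `d` on `Q`, where `V` is the Bregman
divergence generated by `d`. -/
def StrongRelConvexOn {E : Type*} [NormedAddCommGroup E] [InnerProductSpace ℝ E]
    (Q : Set E) (V : E → E → ℝ) (m : ℝ) (ψ : E → ℝ) : Prop :=
  ∀ z ∈ Q, ∀ g : E, IsSubgradOn Q ψ z g → ∀ x ∈ Q, ψ z + ⟪g, x - z⟫ + m * V z x ≤ ψ x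

/-- `y` is a `δ`-approximate minimizer of `Ψ` on `Q`: there exists a subgradient `h`
of `Ψ` at `y` such that `⟪h, x - y⟫ ≥ -δ` for all `x ∈ Q`. -/
def IsApproxMinOn {E : Type*} [NormedAddCommGroup E] [InnerProductSpace ℝ E]
    (Q : Set E) (Ψ : E → ℝ) (δ : ℝ) (y : E) : Prop :=
  y ∈ Q ∧ ∃ h : E, IsSubgradOn Q Ψ y h ∧ ∀ x ∈ Q, -δ ≤ ⟪h, x - y⟫

lemma breg_three_point {E : Type*} [NormedAddCommGroup E] [InnerProductSpace ℝ E]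
    (d : E → ℝ) (Dd : E → E) (z y x : E) :
    breg d Dd z x = breg d Dd z y + ⟪Dd y - Dd z, x - y⟫ + breg d Dd y x := by
  simp only [breg, inner_sub_left, inner_sub_right]
  ring

lemma tendsto_slope_line {E : Type*} [NormedAddCommGroup E] [InnerProductSpace ℝ E] [CompleteSpace E]
    {d : E → ℝ} {g : E} {y : E} (hd : HasGradientAt d g y) (v : E) :
    Filter.Tendsto (fun t : ℝ => (d (y + t • v) - d y) / t) (nhdsWithin 0 (Set.Ioi 0))
      (nhds ⟪g, v⟫) := by
  have hline : HasDerivAt (fun t : ℝ => y + t • v) v 0 := by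
    simpa using ((hasDerivAt_id (0 : ℝ)).smul_const v).const_add y
  have hcomp : HasDerivAt (fun t : ℝ => d (y + t • v)) ⟪g, v⟫ 0 := by
    have hd' : HasFDerivAt d ((InnerProductSpace.toDual ℝ E) g) (y + (0:ℝ) • v) := by
      simpa using hd.hasFDerivAt
    have := hd'.comp_hasDerivAt 0 hline
    simpa using (show HasDerivAt (fun t : ℝ => d (y + t • v)) _ 0 from this)
  have h1 := hasDerivAt_iff_tendsto_slope.1 hcomp
  have h2 : Filter.Tendsto (slope (fun t : ℝ => d (y + t • v)) 0) (nhdsWithin 0 (Set.Ioi 0))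
      (nhds ⟪g, v⟫) :=
    h1.mono_left (nhdsWithin_mono 0 (fun t ht => ne_of_gt ht))
  refine h2.congr (fun t => ?_)
  simp [slope_def_field]

lemma grad_inner_le {E : Type*} [NormedAddCommGroup E] [InnerProductSpace ℝ E] [CompleteSpace E]
    {d : E → ℝ} {g : E} {y : E} (hd : HasGradientAt d g y) {v : E} {C : ℝ}
    (hb : ∀ t : ℝ, t ∈ Set.Ioc (0 : ℝ) 1 → (d (y + t • v) - d y) / t ≤ C) :
    ⟪g, v⟫ ≤ C := by
  refine le_of_tendsto (tendsto_slope_line hd v) ?_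
  filter_upwards [Ioc_mem_nhdsGT_of_mem (Set.left_mem_Ico.2 one_pos)] with t ht
  exact hb t ht

lemma grad_ge {E : Type*} [NormedAddCommGroup E] [InnerProductSpace ℝ E] [CompleteSpace E]
    {d : E → ℝ} {g : E} {y : E} (hd : HasGradientAt d g y) {v : E} {C : ℝ}
    (hb : ∀ t : ℝ, t ∈ Set.Ioc (0 : ℝ) 1 → C ≤ (d (y + t • v) - d y) / t) :
    C ≤ ⟪g, v⟫ := by
  refine ge_of_tendsto (tendsto_slope_line hd v) ?_
  filter_upwards [Ioc_mem_nhdsGT_of_mem (Set.left_mem_Ico.2 one_pos)] with t ht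
  exact hb t ht

lemma breg_nonneg {E : Type*} [NormedAddCommGroup E] [InnerProductSpace ℝ E] [CompleteSpace E]
    {d : E → ℝ} {Dd : E → E} (hd_conv : ConvexOn ℝ Set.univ d)
    (hd_diff : ∀ x, HasGradientAt d (Dd x) x) (y x : E) :
    0 ≤ breg d Dd y x := by
  have h : ⟪Dd y, x - y⟫ ≤ d x - d y := by
    refine grad_inner_le (hd_diff y) (fun t ht => ?_)
    rw [div_le_iff₀ ht.1]
    have hc := hd_conv.2 (Set.mem_univ y) (Set.mem_univ x) (by linarith [ht.2] : (0:ℝ) ≤ 1 - t)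
      (le_of_lt ht.1) (by ring)
    have hpt : (1 - t) • y + t • x = y + t • (x - y) := by
      module
    rw [hpt] at hc
    simp only [smul_eq_mul] at hc
    nlinarith
  simp only [breg]
  linarith

lemma key_strong {E : Type*} [NormedAddCommGroup E] [InnerProductSpace ℝ E] [CompleteSpace E]
    {Q : Set E} (hQ : Convex ℝ Q) {d : E → ℝ} {Dd : E → E}
    (hd_diff : ∀ x, HasGradientAt d (Dd x) x)
    {f : E → ℝ} (hf : ConvexOn ℝ Q f) {c : ℝ} (hc : 0 < c) (z : E) {y : E} (hy : y ∈ Q)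
    {h : E} (hsub : IsSubgradOn Q (fun x => f x + c * breg d Dd z x) y h) :
    ∀ x ∈ Q, f y + c * breg d Dd z y + ⟪h, x - y⟫ + c * breg d Dd y x
      ≤ f x + c * breg d Dd z x := by
  intro x hx
  set v := x - y with hv
  have hkey : ⟪h, v⟫ ≤ f x - f y + c * ⟪Dd y - Dd z, v⟫ := by
    have hcd : HasGradientAt (fun x => c * d x) (c • Dd y) y := by
      rw [hasGradientAt_iff_hasFDerivAt]
      have := (hd_diff y).hasFDerivAt.const_smul c
      simpa [map_smul, smul_eq_mul] using (show HasFDerivAt (fun x => c * d x) _ y from this)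
    have hgrad : ⟪h, v⟫ - (f x - f y) + c * ⟪Dd z, v⟫ ≤ ⟪c • Dd y, v⟫ := by
      refine grad_ge hcd (fun t ht => ?_)
      have hxt : y + t • v ∈ Q := by
        have := hQ hy hx (by linarith [ht.2] : (0:ℝ) ≤ 1 - t) (le_of_lt ht.1) (by ring)
        have hpt : (1 - t) • y + t • x = y + t • v := by
          rw [hv]; module
        rwa [hpt] at this
      have hs := hsub (y + t • v) hxt
      simp only at hs
      have hconv : f (y + t • v) ≤ (1 - t) * f y + t * f x := by
        have := hf.2 hy hx (by linarith [ht.2] : (0:ℝ) ≤ 1 - t) (le_of_lt ht.1) (by ring)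
        have hpt : (1 - t) • y + t • x = y + t • v := by
          rw [hv]; module
        rw [hpt] at this
        simpa using this
      have hinner : ⟪h, y + t • v - y⟫ = t * ⟪h, v⟫ := by
        simp [real_inner_smul_right]
      rw [hinner] at hs
      have hBy : breg d Dd z (y + t • v)
          = breg d Dd z y + (d (y + t • v) - d y) - t * ⟪Dd z, v⟫ := by
        simp only [breg]
        have he : ⟪Dd z, y + t • v - z⟫ = ⟪Dd z, y - z⟫ + t * ⟪Dd z, v⟫ := by
          have h0 : y + t • v - z = (y - z) + t • v := by abel
          rw [h0, inner_add_right, real_inner_smul_right]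
        rw [he]; ring
      have hBy2 : c * breg d Dd z (y + t • v)
          = c * breg d Dd z y + c * (d (y + t • v) - d y) - c * (t * ⟪Dd z, v⟫) := by
        rw [hBy]; ring
      have hs2 : t * ⟪h, v⟫ ≤ t * (f x - f y)
          + (c * (d (y + t • v) - d y) - c * (t * ⟪Dd z, v⟫)) := by
        rw [hBy2] at hs
        nlinarith [hconv]
      rw [le_div_iff₀ ht.1]
      nlinarith [hs2]
    rw [real_inner_smul_left] at hgrad
    rw [inner_sub_left]
    linarith
  have h3 := breg_three_point d Dd z y x
  rw [← hv] at h3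
  have h3c : c * breg d Dd z x
      = c * breg d Dd z y + c * ⟪Dd y - Dd z, v⟫ + c * breg d Dd y x := by rw [h3]; ring
  linarith

/-- Theorem 4.5, merit-function bound: the weighted average of the iterates
of the generalized Mirror-Prox method with a `(δ, L, V)`-model bounds the gap function of
the abstract variational inequality. -/
theorem stmt12
    {E : Type*} [NormedAddCommGroup E] [InnerProductSpace ℝ E] [FiniteDimensional ℝ E]
    (Q : Set E) (hQ : Convex ℝ Q) (hQcomp : IsCompact Q) (hQne : Q.Nonempty)
    (d : E → ℝ) (Dd : E → E)
    (hd_conv : ConvexOn ℝ Set.univ d) (hd_diff : ∀ x, HasGradientAt d (Dd x) x)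
    (ψ ψδ : E → E → ℝ)
    (δ δt Lb : ℝ) (hδ : 0 ≤ δ) (hδt : 0 ≤ δt) (hLb : 0 < Lb)
    (hi : ∀ x ∈ Q, ∀ y ∈ Q, ψ x y ≤ ψδ x y + δ)
    (hii : ∀ y ∈ Q, ConvexOn ℝ Q fun x => ψδ x y)
    (hiii : ∀ x ∈ Q, ψδ x x = 0)
    (hiv : ∀ x ∈ Q, ∀ y ∈ Q, ψδ x y + ψδ y x ≤ δ)
    (husc : ∀ y ∈ Q, UpperSemicontinuousOn (fun x => ψ x y) Q)
    (N : ℕ) (hN : 1 ≤ N)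
    (z w : ℕ → E) (L : ℕ → ℝ)
    (hzQ : ∀ k ≤ N, z k ∈ Q) (hwQ : ∀ k < N, w k ∈ Q)
    (hLpos : ∀ k < N, 0 < L (k + 1)) (hLle : ∀ k < N, L (k + 1) ≤ 2 * Lb)
    (hwmin : ∀ k < N,
      IsApproxMinOn Q (fun x => ψδ x (z k) + L (k + 1) * breg d Dd (z k) x) δt (w k))
    (hzmin : ∀ k < N,
      IsApproxMinOn Q (fun x => ψδ x (w k) + L (k + 1) * breg d Dd (z k) x) δt (z (k + 1)))
    (hls : ∀ k < N,
      ψδ (z (k + 1)) (z k) ≤ ψδ (z (k + 1)) (w k) + ψδ (w k) (z k)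
        + L (k + 1) * (breg d Dd (z k) (w k) + breg d Dd (w k) (z (k + 1))) + δ)
    (wavg : E)
    (hwavg : wavg = (∑ k ∈ Finset.range N, 1 / L (k + 1))⁻¹ •
        ∑ k ∈ Finset.range N, (1 / L (k + 1)) • w k) :
    ∀ u ∈ Q,
      ψ wavg u ≤
        2 * Lb * sSup ((fun v => breg d Dd (z 0) v) '' Q) / N + 3 * δ + 2 * δt := by
  intro u hu
  set S : ℝ := ∑ k ∈ Finset.range N, 1 / L (k + 1) with hS
  have hSpos : 0 < S := by
    refine Finset.sum_pos (fun k hk => one_div_pos.2 (hLpos k (Finset.mem_range.1 hk))) ?_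
    exact Finset.nonempty_range_iff.2 (by omega)
  -- per-step inequality
  have hstep : ∀ k < N, (1 / L (k + 1)) * ψδ (w k) u ≤
      (breg d Dd (z k) u - breg d Dd (z (k + 1)) u) + (1 / L (k + 1)) * (2 * δ + 2 * δt) := by
    intro k hk
    have hLk : 0 < L (k + 1) := hLpos k hk
    have hzk : z k ∈ Q := hzQ k (le_of_lt hk)
    have hzk1 : z (k + 1) ∈ Q := hzQ (k + 1) hk
    have hwk : w k ∈ Q := hwQ k hk
    obtain ⟨-, h1, hsub1, hlb1⟩ := hwmin k hk
    obtain ⟨-, h2, hsub2, hlb2⟩ := hzmin k hk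
    have hA := key_strong hQ hd_diff (hii (z k) hzk) hLk (z k) hwk hsub1 (z (k + 1)) hzk1
    have hA1 := hlb1 (z (k + 1)) hzk1
    have hB := key_strong hQ hd_diff (hii (w k) hwk) hLk (z k) hzk1 hsub2 u hu
    have hB1 := hlb2 u hu
    have hL := hls k hk
    -- combine A' and line search
    have hmid : -δt - δ ≤ ψδ (z (k + 1)) (w k) + L (k + 1) * breg d Dd (z k) (z (k + 1)) := by
      nlinarith [hA, hA1, hL]
    have hmain : -ψδ u (w k) ≤
        L (k + 1) * (breg d Dd (z k) u - breg d Dd (z (k + 1)) u) + 2 * δt + δ := by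
      nlinarith [hB, hB1, hmid]
    have hiv' := hiv u hu (w k) hwk
    have hψb : ψδ (w k) u ≤
        L (k + 1) * (breg d Dd (z k) u - breg d Dd (z (k + 1)) u) + 2 * δ + 2 * δt := by
      linarith
    have := mul_le_mul_of_nonneg_left hψb (le_of_lt (one_div_pos.2 hLk))
    calc (1 / L (k + 1)) * ψδ (w k) u ≤ _ := this
      _ = (breg d Dd (z k) u - breg d Dd (z (k + 1)) u)
          + (1 / L (k + 1)) * (2 * δ + 2 * δt) := by
        field_simp
        ring
  -- sum the step inequalities
  have hsum : ∑ k ∈ Finset.range N, (1 / L (k + 1)) * ψδ (w k) u ≤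
      breg d Dd (z 0) u + S * (2 * δ + 2 * δt) := by
    have h1 : ∑ k ∈ Finset.range N, (1 / L (k + 1)) * ψδ (w k) u ≤
        ∑ k ∈ Finset.range N, ((breg d Dd (z k) u - breg d Dd (z (k + 1)) u)
          + (1 / L (k + 1)) * (2 * δ + 2 * δt)) :=
      Finset.sum_le_sum (fun k hk => hstep k (Finset.mem_range.1 hk))
    rw [Finset.sum_add_distrib, Finset.sum_range_sub' (fun k => breg d Dd (z k) u),
      ← Finset.sum_mul] at h1
    have hnn : 0 ≤ breg d Dd (z N) u := breg_nonneg hd_conv hd_diff _ _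
    have : (∑ k ∈ Finset.range N, 1 / L (k + 1)) * (2 * δ + 2 * δt) = S * (2 * δ + 2 * δt) := by
      rw [hS]
    linarith [h1]
  -- Jensen
  have hwavg' : wavg = ∑ k ∈ Finset.range N, (S⁻¹ * (1 / L (k + 1))) • w k := by
    rw [hwavg, Finset.smul_sum]
    simp [smul_smul]
  have h0 : ∀ k ∈ Finset.range N, 0 ≤ S⁻¹ * (1 / L (k + 1)) := fun k hk =>
    mul_nonneg (inv_nonneg.2 hSpos.le) (one_div_nonneg.2 (hLpos k (Finset.mem_range.1 hk)).le)
  have h1 : ∑ k ∈ Finset.range N, S⁻¹ * (1 / L (k + 1)) = 1 := by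
    rw [← Finset.mul_sum, ← hS, inv_mul_cancel₀ hSpos.ne']
  have hmem : ∀ k ∈ Finset.range N, w k ∈ Q := fun k hk => hwQ k (Finset.mem_range.1 hk)
  have hwavgQ : wavg ∈ Q := by
    rw [hwavg']
    exact hQ.sum_mem h0 h1 hmem
  have hJ : ψδ wavg u ≤ S⁻¹ * ∑ k ∈ Finset.range N, (1 / L (k + 1)) * ψδ (w k) u := by
    have := (hii u hu).map_sum_le h0 h1 hmem
    rw [← hwavg'] at this
    calc ψδ wavg u ≤ ∑ k ∈ Finset.range N, (S⁻¹ * (1 / L (k + 1))) • ψδ (w k) u := this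
      _ = S⁻¹ * ∑ k ∈ Finset.range N, (1 / L (k + 1)) * ψδ (w k) u := by
        rw [Finset.mul_sum]
        exact Finset.sum_congr rfl fun k hk => by rw [smul_eq_mul, mul_assoc]
  -- put things together
  have hψ : ψ wavg u ≤ S⁻¹ * breg d Dd (z 0) u + 3 * δ + 2 * δt := by
    have h2 := hi wavg hwavgQ u hu
    have h3 := mul_le_mul_of_nonneg_left hsum (inv_nonneg.2 hSpos.le)
    have h4 : S⁻¹ * (breg d Dd (z 0) u + S * (2 * δ + 2 * δt))
        = S⁻¹ * breg d Dd (z 0) u + (2 * δ + 2 * δt) := by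
      field_simp
    linarith
  -- bound S⁻¹ * breg by the sup
  have hB0 : 0 ≤ breg d Dd (z 0) u := breg_nonneg hd_conv hd_diff _ _
  have hdd : Differentiable ℝ d := fun x => (hd_diff x).differentiableAt
  have hdc : Continuous d := hdd.continuous
  have hcont : Continuous fun v => breg d Dd (z 0) v := by
    simp only [breg]
    exact (hdc.sub continuous_const).sub
      (Continuous.inner continuous_const (continuous_id.sub continuous_const))
  have hbdd : BddAbove ((fun v => breg d Dd (z 0) v) '' Q) :=
    (hQcomp.bddAbove_image hcont.continuousOn)
  have hBle : breg d Dd (z 0) u ≤ sSup ((fun v => breg d Dd (z 0) v) '' Q) :=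
    le_csSup hbdd ⟨u, hu, rfl⟩
  have hNpos : (0 : ℝ) < N := by exact_mod_cast Nat.lt_of_lt_of_le Nat.zero_lt_one hN
  have hSge : (N : ℝ) * (1 / (2 * Lb)) ≤ S := by
    have := Finset.card_nsmul_le_sum (Finset.range N) (fun k => 1 / L (k + 1)) (1 / (2 * Lb))
      (fun k hk => one_div_le_one_div_of_le (hLpos k (Finset.mem_range.1 hk))
        (hLle k (Finset.mem_range.1 hk)))
    simpa [nsmul_eq_mul, Finset.card_range, hS] using this
  have hSinv : S⁻¹ ≤ 2 * Lb / N := by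
    have h5 : 0 < (N : ℝ) * (1 / (2 * Lb)) := by positivity
    have h6 := inv_anti₀ h5 hSge
    have h7 : ((N : ℝ) * (1 / (2 * Lb)))⁻¹ = 2 * Lb / N := by
      field_simp
    rw [h7] at h6
    exact h6
  have hfin : S⁻¹ * breg d Dd (z 0) u ≤ 2 * Lb * sSup ((fun v => breg d Dd (z 0) v) '' Q) / N := by
    have := mul_le_mul hSinv hBle hB0 (by positivity)
    calc S⁻¹ * breg d Dd (z 0) u ≤ 2 * Lb / N * sSup ((fun v => breg d Dd (z 0) v) '' Q) := this
      _ = 2 * Lb * sSup ((fun v => breg d Dd (z 0) v) '' Q) / N := by ring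
  linarith
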